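/- With the notation below, let F = A⁺ − (A⁺)ᵀ. Then for every i ∈ {1,…,n}, the Artin generator ρ_i preserves the skew-symmetric bilinear form F, i.e. ρ_iᵀ · F · ρ_i = F. -/

import Mathlib

open Matrix

noncomputable section

/-- The strictly upper-triangular part `A⁺` of a matrix `A`. -/
def Aplus (n : ℕ) (A : Matrix (Fin n) (Fin n) ℝ) : Matrix (Fin n) (Fin n) ℝ :=
  fun i j => if i < j then A i j else 0

/-- The Artin generator `ρ_i`: it agrees with the identity except in row `i`,
where `(ρ_i)_{ii} = 1`, `(ρ_i)_{ij} = a_{ij}` for `i < j`, and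
`(ρ_i)_{ij} = −a_{ij}` for `i > j`. -/
def artinGen (n : ℕ) (A : Matrix (Fin n) (Fin n) ℝ) (i : Fin n) :
    Matrix (Fin n) (Fin n) ℝ :=
  fun j k =>
    if j = i then (if k = i then 1 else if i < k then A i k else -A i k)
    else (if j = k then 1 else 0)

theorem stmt_5 (n : ℕ) (hn : 1 ≤ n) (A : Matrix (Fin n) (Fin n) ℝ)
    (hsym : ∀ i j, A i j = A j i) (hdiag : ∀ i, A i i = 0)
    (h01 : ∀ i j, A i j = 0 ∨ A i j = 1)
    (s : Fin n → ℝ) (hs : ∀ i, s i = 1 ∨ s i = -1)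
    (F : Matrix (Fin n) (Fin n) ℝ) (hF : F = Aplus n A - (Aplus n A)ᵀ) :
    ∀ i : Fin n, (artinGen n A i)ᵀ * F * artinGen n A i = F := by
  intro i
  have hFval : ∀ j k, F j k = (if j < k then A j k else 0) - (if k < j then A k j else 0) := by
    intro j k
    rw [hF]
    simp [Aplus, Matrix.sub_apply, Matrix.transpose_apply]
  have hFskew : ∀ j k, F k j = -F j k := by
    intro j k
    rw [hFval, hFval]
    rcases lt_trichotomy j k with h | h | h
    · simp [h, not_lt.2 h.le]
    · simp [h]
    · simp [h, not_lt.2 h.le]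
  have hFdiag : ∀ j, F j j = 0 := by
    intro j
    have := hFskew j j
    linarith
  set E : Matrix (Fin n) (Fin n) ℝ := fun j k => if j = i then F i k else 0 with hE
  have hrho : artinGen n A i = 1 + E := by
    ext j k
    simp only [artinGen, Matrix.add_apply, Matrix.one_apply]; simp only [hE]
    by_cases hj : j = i
    · subst hj
      by_cases hk : k = j
      · subst hk
        simp [hFdiag]
      · have hk' : ¬ j = k := fun h => hk h.symm
        simp only [if_pos rfl, if_neg hk, if_neg hk']
        rw [hFval]
        rcases lt_trichotomy j k with h | h | h
        · simp [h, not_lt.2 h.le]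
        · exact absurd h.symm hk
        · simp [h, not_lt.2 h.le, hsym k j]
    · simp [hj]
  have hEtF : ∀ j k, (Eᵀ * F) j k = F i j * F i k := by
    intro j k
    simp only [Matrix.mul_apply, Matrix.transpose_apply]; simp only [hE]
    rw [Finset.sum_eq_single i]
    · simp
    · intro b _ hb; simp [hb]
    · simp
  have h1 : Eᵀ * F + F * E = 0 := by
    ext j k
    simp only [Matrix.add_apply, Matrix.zero_apply, hEtF]
    have hFE : (F * E) j k = F j i * F i k := by
      simp only [Matrix.mul_apply]; simp only [hE]
      rw [Finset.sum_eq_single i]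
      · simp
      · intro b _ hb; simp [hb]
      · simp
    rw [hFE, hFskew i j]
    ring
  have h2 : Eᵀ * F * E = 0 := by
    ext j k
    rw [Matrix.mul_apply]; simp only [Matrix.zero_apply]
    rw [Finset.sum_eq_single i]
    · simp [hEtF, hFdiag]
    · intro b _ hb; simp [hb, hE]
    · simp
  rw [hrho]
  rw [Matrix.transpose_add, Matrix.transpose_one]
  have : (1 + Eᵀ) * F * (1 + E) = F + (Eᵀ * F + F * E) + Eᵀ * F * E := by
    noncomm_ring
  rw [this, h1, h2]
  simp

end
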